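/- arXiv:2412.00604 — 3 statements merged into one kernel-verified Lean document; each statement's English description precedes it below -/
import Mathlib

section
/- If g : ℝ → ℝ is continuous and periodic with period T > 0, and w is an integrable windowing function, then the windowed time average J_w(M) = (1/M) ∫₀^M w(t/M) g(t) dt converges, as M → ∞, to J = (1/T) ∫₀^T g(t) dt. -/
open Real MeasureTheory Filter Set

private lemma comp_div_int (f : ℝ → ℝ) {M : ℝ} (hM : 0 < M) :
    (∫ t in (0:ℝ)..M, f (t / M)) = M * ∫ s in (0:ℝ)..1, f s := by
  rw [intervalIntegral.integral_comp_div f hM.ne', zero_div, div_self hM.ne', smul_eq_mul]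

private lemma prod_intble (h : ℝ → ℝ) (hh : Continuous h) {C : ℝ} (hC : ∀ t, |h t| ≤ C)
    (u : ℝ → ℝ) (hu : Integrable u) {M : ℝ} (hM : M ≠ 0) :
    Integrable (fun t => u (t / M) * h t) := by
  have h1 : Integrable (fun t => h t * u (t / M)) :=
    (hu.comp_div hM).bdd_mul hh.aestronglyMeasurable
      (c := C) (Filter.Eventually.of_forall fun x => by simpa [Real.norm_eq_abs] using hC x)
  exact h1.congr (Filter.Eventually.of_forall fun t => mul_comm _ _)

/-- Core lemma: integration by parts for a C¹ weight against a function with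
bounded primitive. -/
private lemma tendsto_smooth (h : ℝ → ℝ) (hh : Continuous h)
    {D : ℝ} (hD : ∀ t, |∫ x in (0:ℝ)..t, h x| ≤ D)
    (ψ ψ' : ℝ → ℝ) (hψ : ∀ x, HasDerivAt ψ (ψ' x) x) (hψ' : Continuous ψ') :
    Tendsto (fun M : ℝ => (1 / M) * ∫ t in (0:ℝ)..M, ψ (t / M) * h t) atTop (nhds 0) := by
  set H : ℝ → ℝ := fun t => ∫ x in (0:ℝ)..t, h x with hHdef
  have hD0 : 0 ≤ D := le_trans (abs_nonneg _) (hD 0)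
  set K := |ψ 1| * D + D * ∫ s in (0:ℝ)..1, |ψ' s| with hKdef
  have hHderiv : ∀ x : ℝ, HasDerivAt H (h x) x := fun x =>
    intervalIntegral.integral_hasDerivAt_right (hh.intervalIntegrable 0 x)
      (hh.stronglyMeasurableAtFilter _ _) hh.continuousAt
  apply squeeze_zero_norm' (a := fun M : ℝ => K * M⁻¹)
  · filter_upwards [eventually_gt_atTop (0:ℝ)] with M hM
    have hMne : M ≠ 0 := hM.ne'
    have hu : ∀ x : ℝ, HasDerivAt (fun t => ψ (t / M)) (ψ' (x / M) * (1 / M)) x := by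
      intro x
      have h1 : HasDerivAt (fun t : ℝ => t / M) (1 / M) x := by
        simpa using (hasDerivAt_id x).div_const M
      exact (hψ (x / M)).comp x h1
    have hcpsi : Continuous fun t : ℝ => ψ' (t / M) * (1 / M) :=
      (hψ'.comp (continuous_id.div_const M)).mul continuous_const
    have hibp := intervalIntegral.integral_mul_deriv_eq_deriv_mul
      (u := fun t => ψ (t / M)) (v := H)
      (u' := fun t => ψ' (t / M) * (1 / M)) (v' := h)
      (fun x _ => hu x) (fun x _ => hHderiv x)
      (hcpsi.intervalIntegrable 0 M) (hh.intervalIntegrable 0 M)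
    simp only [div_self hMne] at hibp
    have hH0 : H 0 = 0 := intervalIntegral.integral_same
    rw [hH0, mul_zero, sub_zero] at hibp
    -- bound the remaining integral
    have hbnd : ‖∫ t in (0:ℝ)..M, ψ' (t / M) * (1 / M) * H t‖ ≤
        |∫ t in (0:ℝ)..M, |ψ' (t / M)| * (1 / M) * D| := by
      apply intervalIntegral.norm_integral_le_abs_of_norm_le
      · refine Filter.Eventually.of_forall fun t => ?_
        rw [Real.norm_eq_abs, abs_mul, abs_mul, abs_of_pos (by positivity : (0:ℝ) < 1 / M)]
        exact mul_le_mul_of_nonneg_left (hD t) (by positivity)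
      · exact (((hψ'.comp (continuous_id.div_const M)).abs.mul
          continuous_const).mul continuous_const).intervalIntegrable 0 M
    have hcomp : (∫ t in (0:ℝ)..M, |ψ' (t / M)| * (1 / M) * D) =
        M * ∫ s in (0:ℝ)..1, |ψ' s| * (1 / M) * D :=
      comp_div_int (fun s => |ψ' s| * (1 / M) * D) hM
    have hval : (∫ s in (0:ℝ)..1, |ψ' s| * (1 / M) * D) =
        (∫ s in (0:ℝ)..1, |ψ' s|) * ((1 / M) * D) := by
      simp_rw [mul_assoc]
      exact intervalIntegral.integral_mul_const _ _
    have hIabs : 0 ≤ ∫ s in (0:ℝ)..1, |ψ' s| :=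
      intervalIntegral.integral_nonneg zero_le_one fun s _ => abs_nonneg _
    have hexp : (∫ t in (0:ℝ)..M, |ψ' (t / M)| * (1 / M) * D) =
        D * ∫ s in (0:ℝ)..1, |ψ' s| := by
      rw [hcomp, hval]; field_simp
    have habs : |∫ t in (0:ℝ)..M, |ψ' (t / M)| * (1 / M) * D| =
        D * ∫ s in (0:ℝ)..1, |ψ' s| := by
      rw [hexp, abs_of_nonneg (by positivity)]
    have hnorm : ‖∫ t in (0:ℝ)..M, ψ (t / M) * h t‖ ≤ K := by
      rw [hibp, hKdef]
      calc ‖ψ 1 * H M - ∫ t in (0:ℝ)..M, ψ' (t / M) * (1 / M) * H t‖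
          ≤ ‖ψ 1 * H M‖ + ‖∫ t in (0:ℝ)..M, ψ' (t / M) * (1 / M) * H t‖ :=
            norm_sub_le _ _
        _ ≤ |ψ 1| * D + D * ∫ s in (0:ℝ)..1, |ψ' s| := by
            gcongr
            · calc ‖ψ 1 * H M‖ = |ψ 1| * |H M| := by rw [Real.norm_eq_abs, abs_mul]
                _ ≤ |ψ 1| * D := mul_le_mul_of_nonneg_left (hD M) (abs_nonneg _)
            · calc ‖∫ t in (0:ℝ)..M, ψ' (t / M) * (1 / M) * H t‖
                  ≤ |∫ t in (0:ℝ)..M, |ψ' (t / M)| * (1 / M) * D| := hbnd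
                _ = D * ∫ s in (0:ℝ)..1, |ψ' s| := habs
    calc ‖(1 / M) * ∫ t in (0:ℝ)..M, ψ (t / M) * h t‖
        = (1 / M) * ‖∫ t in (0:ℝ)..M, ψ (t / M) * h t‖ := by
          rw [norm_mul, Real.norm_eq_abs (1 / M), abs_of_pos (by positivity)]
      _ ≤ (1 / M) * K := mul_le_mul_of_nonneg_left hnorm (by positivity)
      _ = K * M⁻¹ := by rw [one_div, mul_comm]
  · simpa using tendsto_inv_atTop_zero.const_mul K

private lemma exists_smooth_approx (φ : ℝ → ℝ) (hφc : Continuous φ) (hφs : HasCompactSupport φ)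
    {ε : ℝ} (hε : 0 < ε) :
    ∃ ψ ψ' : ℝ → ℝ, (∀ x, HasDerivAt ψ (ψ' x) x) ∧ Continuous ψ' ∧ ∀ x, |ψ x - φ x| ≤ ε := by
  have hzero : Tendsto φ (cocompact ℝ) (nhds 0) := by
    rw [hasCompactSupport_iff_eventuallyEq, coclosedCompact_eq_cocompact] at hφs
    exact tendsto_const_nhds.congr' hφs.symm
  have huc : UniformContinuous φ := hφc.uniformContinuous_of_tendsto_cocompact hzero
  obtain ⟨δ₀, hδ₀, hδ⟩ := Metric.uniformContinuous_iff.mp huc ε hε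
  set δ := δ₀ / 2 with hδdef
  have hδpos : 0 < δ := by positivity
  set Φ : ℝ → ℝ := fun x => ∫ u in (0:ℝ)..x, φ u with hΦdef
  have hΦd : ∀ x : ℝ, HasDerivAt Φ (φ x) x := fun x =>
    intervalIntegral.integral_hasDerivAt_right (hφc.intervalIntegrable 0 x)
      (hφc.stronglyMeasurableAtFilter _ _) hφc.continuousAt
  refine ⟨fun x => (Φ (x + δ) - Φ x) / δ, fun x => (φ (x + δ) - φ x) / δ,
    fun x => ?_, ?_, fun x => ?_⟩
  · exact (((hΦd (x + δ)).comp_add_const x δ).sub (hΦd x)).div_const δ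
  · exact ((hφc.comp (continuous_id.add continuous_const)).sub hφc).div_const δ
  · have hint : Φ (x + δ) - Φ x = ∫ u in x..(x + δ), φ u :=
      intervalIntegral.integral_interval_sub_left (hφc.intervalIntegrable 0 (x + δ))
        (hφc.intervalIntegrable 0 x)
    have hconst : (∫ _u in x..(x + δ), φ x) = δ * φ x := by
      rw [intervalIntegral.integral_const, smul_eq_mul, add_sub_cancel_left]
    have hsub : Φ (x + δ) - Φ x - δ * φ x = ∫ u in x..(x + δ), (φ u - φ x) := by
      rw [hint, ← hconst,
        ← intervalIntegral.integral_sub (hφc.intervalIntegrable _ _) intervalIntegrable_const]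
    have hb : ‖∫ u in x..(x + δ), (φ u - φ x)‖ ≤ ε * |x + δ - x| := by
      apply intervalIntegral.norm_integral_le_of_norm_le_const
      intro u hu
      rw [Set.uIoc_of_le (by linarith : x ≤ x + δ)] at hu
      have h1 : dist u x < δ₀ := by
        rw [Real.dist_eq, abs_of_pos (by linarith [hu.1] : (0:ℝ) < u - x)]
        linarith [hu.2]
      rw [Real.norm_eq_abs, ← Real.dist_eq]
      exact (hδ h1).le
    rw [add_sub_cancel_left, abs_of_pos hδpos, Real.norm_eq_abs] at hb
    have heq : (Φ (x + δ) - Φ x) / δ - φ x = (∫ u in x..(x + δ), (φ u - φ x)) / δ := by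
      rw [← hsub]; field_simp
    rw [heq, abs_div, abs_of_pos hδpos, div_le_iff₀ hδpos]
    linarith [hb]

private lemma tendsto_window_zero (h : ℝ → ℝ) (hh : Continuous h)
    {C : ℝ} (hC : ∀ t, |h t| ≤ C)
    {D : ℝ} (hD : ∀ t, |∫ x in (0:ℝ)..t, h x| ≤ D)
    (w : ℝ → ℝ) (hwint : Integrable w) :
    Tendsto (fun M : ℝ => (1 / M) * ∫ t in (0:ℝ)..M, w (t / M) * h t) atTop (nhds 0) := by
  have hC0 : 0 ≤ C := le_trans (abs_nonneg _) (hC 0)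
  rw [NormedAddCommGroup.tendsto_nhds_zero]
  intro ε hε
  set ε' := ε / (2 * C + 2) with hε'def
  have hε' : 0 < ε' := by rw [hε'def]; positivity
  obtain ⟨φ, hφs, hφL1, hφc, hφint⟩ := hwint.exists_hasCompactSupport_integral_sub_le hε'
  obtain ⟨ψ, ψ', hψd, hψ'c, hψφ⟩ := exists_smooth_approx φ hφc hφs hε'
  have hψdiff : Differentiable ℝ ψ := fun x => (hψd x).differentiableAt
  have hψc : Continuous ψ := hψdiff.continuous
  have hcore := (NormedAddCommGroup.tendsto_nhds_zero.mp
      (tendsto_smooth h hh hD ψ ψ' hψd hψ'c)) ε' hε'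
  filter_upwards [hcore, eventually_gt_atTop (0:ℝ)] with M h3 hM
  have hMne : M ≠ 0 := hM.ne'
  have i1 : IntervalIntegrable (fun t => (w (t / M) - φ (t / M)) * h t) volume 0 M := by
    have h5 : Integrable (fun t => (fun s => w s - φ s) (t / M) * h t) :=
      prod_intble h hh hC _ (hwint.sub hφint) hMne
    exact h5.intervalIntegrable
  have i2 : IntervalIntegrable (fun t => (φ (t / M) - ψ (t / M)) * h t) volume 0 M :=
    (((hφc.comp (continuous_id.div_const M)).sub
      (hψc.comp (continuous_id.div_const M))).mul hh).intervalIntegrable 0 M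
  have i3 : IntervalIntegrable (fun t => ψ (t / M) * h t) volume 0 M :=
    ((hψc.comp (continuous_id.div_const M)).mul hh).intervalIntegrable 0 M
  have hsplit : (∫ t in (0:ℝ)..M, w (t / M) * h t) =
      (∫ t in (0:ℝ)..M, (w (t / M) - φ (t / M)) * h t) +
      ((∫ t in (0:ℝ)..M, (φ (t / M) - ψ (t / M)) * h t) +
       (∫ t in (0:ℝ)..M, ψ (t / M) * h t)) := by
    rw [← intervalIntegral.integral_add i2 i3, ← intervalIntegral.integral_add i1 (i2.add i3)]
    apply intervalIntegral.integral_congr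
    intro t _; ring
  have hT1 : ‖∫ t in (0:ℝ)..M, (w (t / M) - φ (t / M)) * h t‖ ≤ M * (ε' * C) := by
    have hbfun : IntervalIntegrable (fun t => |w (t / M) - φ (t / M)| * C) volume 0 M := by
      have h6 : Integrable (fun t => |(fun s => w s - φ s) (t / M)| * C) :=
        ((hwint.sub hφint).comp_div hMne).abs.mul_const C
      exact h6.intervalIntegrable
    have h1 : ‖∫ t in (0:ℝ)..M, (w (t / M) - φ (t / M)) * h t‖ ≤
        |∫ t in (0:ℝ)..M, |w (t / M) - φ (t / M)| * C| := by
      apply intervalIntegral.norm_integral_le_abs_of_norm_le _ hbfun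
      refine Filter.Eventually.of_forall fun t => ?_
      rw [Real.norm_eq_abs, abs_mul]
      exact mul_le_mul_of_nonneg_left (hC t) (abs_nonneg _)
    have h2 : (∫ t in (0:ℝ)..M, |w (t / M) - φ (t / M)| * C) =
        M * ∫ s in (0:ℝ)..1, |w s - φ s| * C :=
      comp_div_int (fun s => |w s - φ s| * C) hM
    have hle : (∫ s in (0:ℝ)..1, |w s - φ s|) ≤ ε' := by
      rw [intervalIntegral.integral_of_le zero_le_one]
      calc (∫ s in Set.Ioc (0:ℝ) 1, |w s - φ s|) ≤ ∫ s, |w s - φ s| :=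
            setIntegral_le_integral (hwint.sub hφint).abs
              (Filter.Eventually.of_forall fun s => abs_nonneg _)
        _ ≤ ε' := by simpa [Real.norm_eq_abs] using hφL1
    have h3' : (∫ s in (0:ℝ)..1, |w s - φ s| * C) ≤ ε' * C := by
      calc (∫ s in (0:ℝ)..1, |w s - φ s| * C) = (∫ s in (0:ℝ)..1, |w s - φ s|) * C :=
            intervalIntegral.integral_mul_const _ _
        _ ≤ ε' * C := mul_le_mul_of_nonneg_right hle hC0
    have hnn : 0 ≤ ∫ s in (0:ℝ)..1, |w s - φ s| * C :=
      intervalIntegral.integral_nonneg zero_le_one fun s _ =>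
        mul_nonneg (abs_nonneg _) hC0
    calc ‖∫ t in (0:ℝ)..M, (w (t / M) - φ (t / M)) * h t‖
        ≤ |M * ∫ s in (0:ℝ)..1, |w s - φ s| * C| := by rw [← h2]; exact h1
      _ = M * ∫ s in (0:ℝ)..1, |w s - φ s| * C := abs_of_nonneg (mul_nonneg hM.le hnn)
      _ ≤ M * (ε' * C) := mul_le_mul_of_nonneg_left h3' hM.le
  have hT2 : ‖∫ t in (0:ℝ)..M, (φ (t / M) - ψ (t / M)) * h t‖ ≤ ε' * C * M := by
    have h7 := intervalIntegral.norm_integral_le_of_norm_le_const (C := ε' * C)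
      (f := fun t => (φ (t / M) - ψ (t / M)) * h t) (a := 0) (b := M) ?_
    · simpa [abs_of_pos hM] using h7
    · intro t _
      rw [Real.norm_eq_abs, abs_mul]
      have h4 : |φ (t / M) - ψ (t / M)| ≤ ε' := by
        rw [abs_sub_comm]; exact hψφ (t / M)
      exact mul_le_mul h4 (hC t) (abs_nonneg _) hε'.le
  have hMinv : (0:ℝ) < 1 / M := by positivity
  have e1 : ‖(1 / M) * ∫ t in (0:ℝ)..M, (w (t / M) - φ (t / M)) * h t‖ ≤ ε' * C := by
    rw [norm_mul, Real.norm_eq_abs (1 / M), abs_of_pos hMinv]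
    calc (1 / M) * ‖∫ t in (0:ℝ)..M, (w (t / M) - φ (t / M)) * h t‖
        ≤ (1 / M) * (M * (ε' * C)) := mul_le_mul_of_nonneg_left hT1 hMinv.le
      _ = ε' * C := by field_simp
  have e2 : ‖(1 / M) * ∫ t in (0:ℝ)..M, (φ (t / M) - ψ (t / M)) * h t‖ ≤ ε' * C := by
    rw [norm_mul, Real.norm_eq_abs (1 / M), abs_of_pos hMinv]
    calc (1 / M) * ‖∫ t in (0:ℝ)..M, (φ (t / M) - ψ (t / M)) * h t‖
        ≤ (1 / M) * (ε' * C * M) := mul_le_mul_of_nonneg_left hT2 hMinv.le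
      _ = ε' * C := by field_simp
  have heps : ε' * (2 * C + 2) = ε := by rw [hε'def]; field_simp
  calc ‖(1 / M) * ∫ t in (0:ℝ)..M, w (t / M) * h t‖
      = ‖((1 / M) * ∫ t in (0:ℝ)..M, (w (t / M) - φ (t / M)) * h t) +
        (((1 / M) * ∫ t in (0:ℝ)..M, (φ (t / M) - ψ (t / M)) * h t) +
         ((1 / M) * ∫ t in (0:ℝ)..M, ψ (t / M) * h t))‖ := by
        rw [hsplit, mul_add, mul_add]
    _ ≤ ‖(1 / M) * ∫ t in (0:ℝ)..M, (w (t / M) - φ (t / M)) * h t‖ +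
        (‖(1 / M) * ∫ t in (0:ℝ)..M, (φ (t / M) - ψ (t / M)) * h t‖ +
         ‖(1 / M) * ∫ t in (0:ℝ)..M, ψ (t / M) * h t‖) :=
        (norm_add_le _ _).trans (add_le_add le_rfl (norm_add_le _ _))
    _ < ε' * C + (ε' * C + ε') :=
        add_lt_add_of_le_of_lt e1 (add_lt_add_of_le_of_lt e2 h3)
    _ ≤ ε := by linarith [heps, hε'.le]

theorem windowed_average_converges_to_period_average
    (g : ℝ → ℝ) (T : ℝ) (hT : 0 < T) (hg : Continuous g)
    (hper : Function.Periodic g T)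
    (w : ℝ → ℝ) (hwint : Integrable w)
    (hw0 : ∀ s : ℝ, s ∉ Set.Ioo (0:ℝ) 1 → w s = 0)
    (hw1 : (∫ s in (0:ℝ)..1, w s) = 1) :
    Tendsto (fun M : ℝ => (1 / M) * ∫ t in (0:ℝ)..M, w (t / M) * g t)
      atTop (nhds ((1 / T) * ∫ t in (0:ℝ)..T, g t)) := by
  set J := (1 / T) * ∫ t in (0:ℝ)..T, g t with hJ
  set h : ℝ → ℝ := fun t => g t - J with hhdef
  have hhcont : Continuous h := hg.sub continuous_const
  have hhper : Function.Periodic h T := fun t => by simp [hhdef, hper t]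
  obtain ⟨C, hCr⟩ := (hhper.isBounded_of_continuous hT.ne' hhcont).exists_norm_le
  have hC : ∀ t, |h t| ≤ C := fun t => by
    simpa [Real.norm_eq_abs] using hCr (h t) (Set.mem_range_self t)
  have hint : ∀ a b, IntervalIntegrable h volume a b := fun a b =>
    hhcont.intervalIntegrable a b
  have hTJ : (∫ x in (0:ℝ)..T, h x) = 0 := by
    simp only [hhdef]
    rw [intervalIntegral.integral_sub (hg.intervalIntegrable 0 T) intervalIntegrable_const,
      intervalIntegral.integral_const, hJ, smul_eq_mul, sub_zero]
    field_simp
    ring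
  set S := (fun t => ∫ x in (0:ℝ)..t, h x) '' Set.Icc 0 T with hSdef
  set D := max |sInf S| |sSup S| with hDdef
  have hDb : ∀ t, |∫ x in (0:ℝ)..t, h x| ≤ D := by
    intro t
    have h1 := hhper.sInf_add_zsmul_le_integral_of_pos (hint 0 T) hT t
    have h2 := hhper.integral_le_sSup_add_zsmul_of_pos (hint 0 T) hT t
    rw [hTJ, smul_zero, add_zero] at h1 h2
    rw [abs_le]
    refine ⟨?_, ?_⟩
    · calc -D ≤ -|sInf S| := neg_le_neg (le_max_left _ _)
        _ ≤ sInf S := neg_abs_le _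
        _ ≤ _ := h1
    · exact h2.trans ((le_abs_self _).trans (le_max_right _ _))
  have hcore := tendsto_window_zero h hhcont hC hDb w hwint
  have key : (fun M : ℝ => J + (1 / M) * ∫ t in (0:ℝ)..M, w (t / M) * h t)
      =ᶠ[atTop] (fun M : ℝ => (1 / M) * ∫ t in (0:ℝ)..M, w (t / M) * g t) := by
    filter_upwards [eventually_gt_atTop (0:ℝ)] with M hM
    have hMne : M ≠ 0 := hM.ne'
    have iJ : IntervalIntegrable (fun t => w (t / M) * J) volume 0 M :=
      ((hwint.comp_div hMne).mul_const J).intervalIntegrable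
    have ih : IntervalIntegrable (fun t => w (t / M) * h t) volume 0 M :=
      (prod_intble h hhcont hC w hwint hMne).intervalIntegrable
    have hsplit : (∫ t in (0:ℝ)..M, w (t / M) * g t)
        = (∫ t in (0:ℝ)..M, w (t / M) * J) + ∫ t in (0:ℝ)..M, w (t / M) * h t := by
      rw [← intervalIntegral.integral_add iJ ih]
      apply intervalIntegral.integral_congr
      intro t _
      simp only [hhdef]
      ring
    have hfirst : (∫ t in (0:ℝ)..M, w (t / M) * J) = M * J := by
      rw [intervalIntegral.integral_mul_const, comp_div_int w hM, hw1, mul_one]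
    simp only [hsplit, hfirst, mul_add]
    have : (1 / M) * (M * J) = J := by field_simp
    rw [this]
  have hfin := (tendsto_const_nhds (x := J) (f := atTop)).add hcore
  rw [add_zero] at hfin
  exact hfin.congr' key
end

section
/- Let h : ℝ → ℝ be continuous with period 1 and mean zero (∫₀¹ h = 0), and let w : ℝ → ℝ be a C¹ windowing function with w(0) = w(1) = 0. Then |∫₀¹ w(s) h(ks) ds| ≤ C/k for every positive integer k, where C = ‖w'‖_∞ · sup_{x} |∫₀^x h(s) ds|. -/
open Set

theorem C1_window_mean_zero_rate
    (h : ℝ → ℝ) (hc : Continuous h) (hper : Function.Periodic h 1)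
    (hmean : (∫ s in (0:ℝ)..1, h s) = 0)
    (w : ℝ → ℝ) (hwC1 : ContDiff ℝ 1 w)
    (hw00 : w 0 = 0) (hw11 : w 1 = 0)
    (hw0 : ∀ s : ℝ, s ∉ Set.Ioo (0:ℝ) 1 → w s = 0)
    (hw1 : (∫ s in (0:ℝ)..1, w s) = 1)
    (k : ℕ) (hk : 0 < k) :
    |∫ s in (0:ℝ)..1, w s * h (k * s)| ≤
      ((⨆ x : ℝ, |deriv w x|) * ⨆ x : ℝ, |∫ s in (0:ℝ)..x, h s|) / k := by
  have hk0 : (k : ℝ) ≠ 0 := Nat.cast_ne_zero.mpr hk.ne'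
  set H : ℝ → ℝ := fun x => ∫ s in (0:ℝ)..x, h s with hHdef
  have hint : ∀ a b : ℝ, IntervalIntegrable h MeasureTheory.volume a b :=
    fun a b => hc.intervalIntegrable a b
  -- H has derivative h everywhere
  have hHderiv : ∀ x : ℝ, HasDerivAt H (h x) x := fun x =>
    intervalIntegral.integral_hasDerivAt_right (hint 0 x)
      (hc.stronglyMeasurableAtFilter _ _) hc.continuousAt
  have hHcont : Continuous H := by
    have : Differentiable ℝ H := fun x => (hHderiv x).differentiableAt
    exact this.continuous
  -- H is 1-periodic
  have hHper : Function.Periodic H 1 := by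
    intro x
    have h1 : H x + (∫ s in x..(x + 1), h s) = H (x + 1) :=
      intervalIntegral.integral_add_adjacent_intervals (hint 0 x) (hint x (x + 1))
    have h2 : (∫ s in x..(x + 1), h s) = ∫ s in (0:ℝ)..(0 + 1), h s :=
      hper.intervalIntegral_add_eq x 0
    rw [zero_add] at h2
    rw [h2, hmean, add_zero] at h1
    exact h1.symm
  set M₁ : ℝ := ⨆ x : ℝ, |deriv w x| with hM₁def
  set M₂ : ℝ := ⨆ x : ℝ, |H x| with hM₂def
  have hdwcont : Continuous (deriv w) := hwC1.continuous_deriv le_rfl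
  -- deriv w vanishes outside [0,1]
  have hdw0 : ∀ x : ℝ, x ∉ Icc (0:ℝ) 1 → deriv w x = 0 := by
    intro x hx
    rcases lt_or_ge x 0 with hlt | hge
    · have hev : w =ᶠ[nhds x] (fun _ => (0:ℝ)) := by
        filter_upwards [Iio_mem_nhds hlt] with y hy
        exact hw0 y (fun hy' => absurd hy'.1 (not_lt.mpr (le_of_lt hy)))
      rw [hev.deriv_eq, deriv_const]
    · have hgt : 1 < x := by
        by_contra hle
        exact hx ⟨hge, not_lt.mp hle⟩
      have hev : w =ᶠ[nhds x] (fun _ => (0:ℝ)) := by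
        filter_upwards [Ioi_mem_nhds hgt] with y hy
        exact hw0 y (fun hy' => absurd hy'.2 (not_lt.mpr (le_of_lt hy)))
      rw [hev.deriv_eq, deriv_const]
  have hbdd₁ : BddAbove (Set.range fun x : ℝ => |deriv w x|) := by
    have hcpt : IsCompact ((fun x : ℝ => |deriv w x|) '' Icc 0 1) :=
      (isCompact_Icc).image (hdwcont.abs)
    apply hcpt.bddAbove.insert 0 |>.mono
    rintro _ ⟨x, rfl⟩
    by_cases hx : x ∈ Icc (0:ℝ) 1
    · exact Set.mem_insert_of_mem _ ⟨x, hx, rfl⟩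
    · simp [hdw0 x hx]
  have hbdd₂ : BddAbove (Set.range fun x : ℝ => |H x|) := by
    have hcpt : IsCompact ((fun x : ℝ => |H x|) '' Icc 0 1) :=
      (isCompact_Icc).image (hHcont.abs)
    apply hcpt.bddAbove.mono
    rintro _ ⟨x, rfl⟩
    obtain ⟨y, hy, hxy⟩ := (hHper.comp (fun y => |y|)).exists_mem_Ico₀ one_pos x
    exact ⟨y, Ico_subset_Icc_self hy, hxy.symm⟩
  have hM₁le : ∀ x : ℝ, |deriv w x| ≤ M₁ := fun x => le_ciSup hbdd₁ x
  have hM₂le : ∀ x : ℝ, |H x| ≤ M₂ := fun x => le_ciSup hbdd₂ x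
  have hM₁0 : 0 ≤ M₁ := le_trans (abs_nonneg _) (hM₁le 0)
  have hM₂0 : 0 ≤ M₂ := le_trans (abs_nonneg _) (hM₂le 0)
  -- integration by parts
  set v : ℝ → ℝ := fun x => (k:ℝ)⁻¹ * H (k * x) with hvdef
  have hv : ∀ x ∈ uIcc (0:ℝ) 1, HasDerivAt v (h (k * x)) x := by
    intro x _
    have h1 : HasDerivAt (fun x : ℝ => (k:ℝ) * x) (k:ℝ) x := by
      simpa using (hasDerivAt_id x).const_mul (k:ℝ)
    have h2 : HasDerivAt (fun x : ℝ => H ((k:ℝ) * x)) (h ((k:ℝ) * x) * (k:ℝ)) x :=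
      (hHderiv ((k:ℝ) * x)).comp x h1
    have h3 := h2.const_mul ((k:ℝ)⁻¹)
    rw [mul_comm (h _) _, ← mul_assoc, inv_mul_cancel₀ hk0, one_mul] at h3
    exact h3
  have hu : ∀ x ∈ uIcc (0:ℝ) 1, HasDerivAt w (deriv w x) x := fun x _ =>
    ((hwC1.differentiable one_ne_zero) x).hasDerivAt
  have hu' : IntervalIntegrable (deriv w) MeasureTheory.volume 0 1 :=
    hdwcont.intervalIntegrable 0 1
  have hv' : IntervalIntegrable (fun x => h ((k:ℝ) * x)) MeasureTheory.volume 0 1 :=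
    (hc.comp (continuous_const.mul continuous_id)).intervalIntegrable 0 1
  have hibp := intervalIntegral.integral_mul_deriv_eq_deriv_mul hu hv hu' hv'
  rw [hw00, hw11, zero_mul, zero_mul, sub_zero, zero_sub] at hibp
  rw [hibp, abs_neg]
  have hbound : ∀ x ∈ Set.uIoc (0:ℝ) 1, ‖deriv w x * v x‖ ≤ M₁ * M₂ * (k:ℝ)⁻¹ := by
    intro x _
    have : ‖deriv w x * v x‖ = |deriv w x| * |H ((k:ℝ) * x)| * (k:ℝ)⁻¹ := by
      simp only [hvdef, Real.norm_eq_abs, abs_mul, abs_inv, Nat.abs_cast]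
      ring
    rw [this]
    have hkinv : (0:ℝ) ≤ (k:ℝ)⁻¹ := by positivity
    exact mul_le_mul_of_nonneg_right
      (mul_le_mul (hM₁le x) (hM₂le _) (abs_nonneg _) hM₁0) hkinv
  calc |∫ x in (0:ℝ)..1, deriv w x * v x|
      ≤ M₁ * M₂ * (k:ℝ)⁻¹ * |1 - 0| :=
        intervalIntegral.norm_integral_le_of_norm_le_const hbound
    _ = M₁ * M₂ / k := by simp [div_eq_mul_inv]
end

section
/- Let h be continuous and 1-periodic with mean zero, and let w be a windowing function of class C^l on ℝ (all derivatives up to order l vanish at 0 and 1, w vanishing outside (0,1)) whose l-th derivative is Lipschitz. Then |∫₀¹ w(s) h(ks) ds| = O(k^{-(l+1)}) as k → ∞ through the positive integers. -/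
open Set MeasureTheory intervalIntegral

/-- Iterated mean-zero antiderivatives. -/
noncomputable def iterAnti (h : ℝ → ℝ) : ℕ → ℝ → ℝ
  | 0 => h
  | n + 1 => fun x => (∫ t in (0:ℝ)..x, iterAnti h n t)
      - ∫ y in (0:ℝ)..1, ∫ t in (0:ℝ)..y, iterAnti h n t

lemma iterAnti_props {h : ℝ → ℝ} (hc : Continuous h) (hper : Function.Periodic h 1)
    (hmean : (∫ s in (0:ℝ)..1, h s) = 0) (n : ℕ) :
    Continuous (iterAnti h n) ∧ Function.Periodic (iterAnti h n) 1 ∧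
      (∫ s in (0:ℝ)..1, iterAnti h n s) = 0 := by
  induction n with
  | zero => exact ⟨hc, hper, hmean⟩
  | succ n ih =>
    obtain ⟨hcn, hpn, hmn⟩ := ih
    have hint : ∀ a b : ℝ, IntervalIntegrable (iterAnti h n) volume a b :=
      fun a b => hcn.intervalIntegrable a b
    have hcP : Continuous fun x => ∫ t in (0:ℝ)..x, iterAnti h n t :=
      intervalIntegral.continuous_primitive hint 0
    have hcS : Continuous (iterAnti h (n+1)) := by
      show Continuous fun x => (∫ t in (0:ℝ)..x, iterAnti h n t) - _
      exact hcP.sub continuous_const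
    refine ⟨hcS, ?_, ?_⟩
    · intro x
      show (∫ t in (0:ℝ)..(x+1), iterAnti h n t) - _
          = (∫ t in (0:ℝ)..x, iterAnti h n t) - _
      have h1 : (∫ t in (0:ℝ)..(x+1), iterAnti h n t)
          = (∫ t in (0:ℝ)..x, iterAnti h n t) + ∫ t in x..(x+1), iterAnti h n t :=
        (integral_add_adjacent_intervals (hint 0 x) (hint x (x+1))).symm
      have h2 : (∫ t in x..(x+1), iterAnti h n t) = ∫ t in (0:ℝ)..(0+1), iterAnti h n t :=
        hpn.intervalIntegral_add_eq x 0
      rw [h1, h2]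
      rw [show ((0:ℝ)+1) = 1 by ring, hmn]
      ring
    · show (∫ s in (0:ℝ)..1, ((∫ t in (0:ℝ)..s, iterAnti h n t) - _)) = 0
      rw [intervalIntegral.integral_sub (hcP.intervalIntegrable 0 1)
        (intervalIntegrable_const), intervalIntegral.integral_const]
      simp

lemma iterAnti_hasDerivAt {h : ℝ → ℝ} {n : ℕ} (hcn : Continuous (iterAnti h n)) (x : ℝ) :
    HasDerivAt (iterAnti h (n+1)) (iterAnti h n x) x := by
  have := (hcn.integral_hasStrictDerivAt 0 x).hasDerivAt
  exact this.sub_const _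

lemma bound_of_periodic {f : ℝ → ℝ} (hc : Continuous f) (hp : Function.Periodic f 1) :
    ∃ M : ℝ, 0 ≤ M ∧ ∀ x, |f x| ≤ M := by
  obtain ⟨M, hM⟩ := (isCompact_Icc (a := (0:ℝ)) (b := 1)).exists_bound_of_continuousOn
    hc.continuousOn
  refine ⟨max M 0, le_max_right _ _, fun x => ?_⟩
  have hx : x - (⌊x⌋ : ℝ) ∈ Icc (0:ℝ) 1 := by
    constructor
    · linarith [Int.floor_le x]
    · linarith [Int.lt_floor_add_one x]
  have hfx : f (x - (⌊x⌋ : ℝ) * 1) = f x := hp.sub_int_mul_eq ⌊x⌋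
  calc |f x| = |f (x - (⌊x⌋ : ℝ) * 1)| := by rw [hfx]
    _ = ‖f (x - (⌊x⌋ : ℝ))‖ := by rw [mul_one]; rfl
    _ ≤ M := hM _ hx
    _ ≤ max M 0 := le_max_left _ _

/-- Key chunking bound for the last step. -/
lemma chunk_bound (g F : ℝ → ℝ) (K : NNReal) (hg : LipschitzWith K g)
    (hF : Continuous F) (hFper : Function.Periodic F 1)
    (hFmean : (∫ s in (0:ℝ)..1, F s) = 0)
    (M : ℝ) (hM0 : 0 ≤ M) (hM : ∀ x, |F x| ≤ M)
    (k : ℕ) (hk : 0 < k) :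
    |∫ s in (0:ℝ)..1, g s * F (k * s)| ≤ (K : ℝ) * M / k := by
  have hk0 : (k : ℝ) ≠ 0 := Nat.cast_ne_zero.mpr hk.ne'
  have hkpos : (0:ℝ) < k := Nat.cast_pos.mpr hk
  set a : ℕ → ℝ := fun j => j / k with ha
  have hcont : Continuous fun s => g s * F (k * s) :=
    (hg.continuous).mul (hF.comp (continuous_const.mul continuous_id))
  have hintgr : ∀ (c d : ℝ), IntervalIntegrable (fun s => g s * F (k * s)) volume c d :=
    fun c d => hcont.intervalIntegrable c d
  have hsum : ∑ j ∈ Finset.range k, ∫ s in a j..a (j+1), g s * F (k * s)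
      = ∫ s in (a 0)..(a k), g s * F (k * s) :=
    intervalIntegral.sum_integral_adjacent_intervals (fun j _ => hintgr _ _)
  have ha0 : a 0 = 0 := by simp [ha]
  have hak : a k = 1 := by show (k:ℝ) / k = 1; exact div_self hk0
  -- each chunk of F integrates to zero
  have hFzero : ∀ j : ℕ, (∫ s in a j..a (j+1), F (k * s)) = 0 := by
    intro j
    rw [intervalIntegral.integral_comp_mul_left _ hk0]
    have h1 : (k:ℝ) * a j = j := by show (k:ℝ) * ((j:ℝ) / k) = j; field_simp
    have h2 : (k:ℝ) * a (j+1) = (j:ℝ) + 1 := by push_cast [ha]; field_simp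
    rw [h1, h2]
    have := hFper.intervalIntegral_add_eq (j:ℝ) 0
    rw [this, show ((0:ℝ)+1) = 1 by ring, hFmean, smul_zero]
  -- bound each chunk
  have hstep : ∀ j : ℕ, a (j+1) = a j + 1 / k := by
    intro j; push_cast [ha]; field_simp
  have hchunk : ∀ j : ℕ, |∫ s in a j..a (j+1), g s * F (k * s)| ≤ (K : ℝ) * M / k / k := by
    intro j
    have hrw : (∫ s in a j..a (j+1), g s * F (k * s))
        = ∫ s in a j..a (j+1), (g s - g (a j)) * F (k * s) := by
      have hFint : IntervalIntegrable (fun s => g (a j) * F (k * s)) volume (a j) (a (j+1)) :=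
        Continuous.intervalIntegrable (by continuity) _ _
      have heq : (∫ s in a j..a (j+1), (g s - g (a j)) * F (k * s))
          = (∫ s in a j..a (j+1), g s * F (k * s))
            - ∫ s in a j..a (j+1), g (a j) * F (k * s) := by
        rw [← intervalIntegral.integral_sub (hintgr _ _) hFint]
        congr 1
        funext s
        ring
      rw [heq, intervalIntegral.integral_const_mul, hFzero j, mul_zero, sub_zero]
    rw [hrw]
    have hle : a j ≤ a (j+1) := by
      have h0 : (0:ℝ) ≤ 1 / k := by positivity
      rw [hstep j]; linarith
    have hbd : ∀ s ∈ Set.uIoc (a j) (a (j+1)), ‖(g s - g (a j)) * F (k * s)‖ ≤ (K : ℝ) * M / k := by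
      intro s hs
      rw [Set.uIoc_of_le hle] at hs
      have h1 : |g s - g (a j)| ≤ (K : ℝ) * (1 / k) := by
        have := hg.dist_le_mul s (a j)
        rw [Real.dist_eq, Real.dist_eq] at this
        refine this.trans ?_
        have : |s - a j| ≤ 1 / k := by
          rw [abs_of_nonneg (by linarith [hs.1.le])]
          have := hs.2; rw [hstep j] at this; linarith
        exact mul_le_mul_of_nonneg_left this K.coe_nonneg
      have h2 : |F (k * s)| ≤ M := hM _
      calc ‖(g s - g (a j)) * F (k * s)‖ = |g s - g (a j)| * |F (k * s)| := abs_mul _ _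
        _ ≤ ((K : ℝ) * (1 / k)) * M :=
            mul_le_mul h1 h2 (abs_nonneg _)
              (mul_nonneg K.coe_nonneg (one_div_nonneg.mpr (Nat.cast_nonneg k)))
        _ = (K : ℝ) * M / k := by ring
    have := intervalIntegral.norm_integral_le_of_norm_le_const hbd
    rw [Real.norm_eq_abs] at this
    refine this.trans ?_
    rw [hstep j]
    rw [show a j + 1 / (k:ℝ) - a j = 1 / k by ring, abs_of_nonneg (by positivity)]
    rw [div_div]
    rw [mul_one_div]
    apply le_of_eq
    ring
  -- combine
  have := Finset.abs_sum_le_sum_abs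
    (fun j => ∫ s in a j..a (j+1), g s * F (k * s)) (Finset.range k)
  rw [hsum, ha0, hak] at this
  refine this.trans ?_
  calc ∑ j ∈ Finset.range k, |∫ s in a j..a (j+1), g s * F (k * s)|
      ≤ ∑ _j ∈ Finset.range k, (K : ℝ) * M / k / k :=
        Finset.sum_le_sum (fun j _ => hchunk j)
    _ = k * ((K : ℝ) * M / k / k) := by
        rw [Finset.sum_const, Finset.card_range, nsmul_eq_mul]
    _ = (K : ℝ) * M / k := by field_simp

theorem Cl_window_rate
    (h : ℝ → ℝ) (hc : Continuous h) (hper : Function.Periodic h 1)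
    (hmean : (∫ s in (0:ℝ)..1, h s) = 0)
    (l : ℕ) (w : ℝ → ℝ) (hwCl : ContDiff ℝ l w)
    (K : NNReal) (hlip : LipschitzWith K (iteratedDeriv l w))
    (hvanish : ∀ i : ℕ, i ≤ l → iteratedDeriv i w 0 = 0 ∧ iteratedDeriv i w 1 = 0)
    (hw0 : ∀ s : ℝ, s ∉ Set.Ioo (0:ℝ) 1 → w s = 0)
    (hw1 : (∫ s in (0:ℝ)..1, w s) = 1) :
    ∃ C : ℝ, ∀ k : ℕ, 0 < k →
      |∫ s in (0:ℝ)..1, w s * h (k * s)| ≤ C / (k : ℝ) ^ (l + 1) := by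
  obtain ⟨M, hM0, hM⟩ := bound_of_periodic (iterAnti_props hc hper hmean l).1
    (iterAnti_props hc hper hmean l).2.1
  refine ⟨(K : ℝ) * M, fun k hk => ?_⟩
  have hk0 : (k : ℝ) ≠ 0 := Nat.cast_ne_zero.mpr hk.ne'
  have hkpos : (0:ℝ) < k := Nat.cast_pos.mpr hk
  -- iterated integration by parts
  have key : ∀ i : ℕ, i ≤ l →
      (∫ s in (0:ℝ)..1, w s * h (k * s))
        = (-(1:ℝ)/k) ^ i * ∫ s in (0:ℝ)..1, iteratedDeriv i w s * iterAnti h i (k * s) := by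
    intro i hi
    induction i with
    | zero => simp [iterAnti, iteratedDeriv_zero]
    | succ i ih =>
      have hil : i < l := Nat.lt_of_succ_le hi
      have hIH := ih (le_of_lt hil)
      obtain ⟨hci, hpi, hmi⟩ := iterAnti_props hc hper hmean i
      obtain ⟨hci1, hpi1, hmi1⟩ := iterAnti_props hc hper hmean (i+1)
      -- integration by parts on [0,1]
      set v : ℝ → ℝ := fun s => (1 / (k:ℝ)) * iterAnti h (i+1) (k * s) with hvdef
      have hu : ∀ x ∈ Set.uIcc (0:ℝ) 1,
          HasDerivAt (iteratedDeriv i w) (iteratedDeriv (i+1) w x) x := by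
        intro x _
        have hd : Differentiable ℝ (iteratedDeriv i w) :=
          hwCl.differentiable_iteratedDeriv i (by exact_mod_cast hil)
        rw [iteratedDeriv_succ]
        exact (hd x).hasDerivAt
      have hv : ∀ x ∈ Set.uIcc (0:ℝ) 1, HasDerivAt v (iterAnti h i (k * x)) x := by
        intro x _
        have h1 : HasDerivAt (fun s : ℝ => (k:ℝ) * s) ((k:ℝ)) x := by
          simpa using (hasDerivAt_id x).const_mul (k:ℝ)
        have h2 : HasDerivAt (iterAnti h (i+1)) (iterAnti h i ((k:ℝ) * x)) ((k:ℝ) * x) :=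
          iterAnti_hasDerivAt hci ((k:ℝ) * x)
        have h3 : HasDerivAt (fun s : ℝ => iterAnti h (i+1) ((k:ℝ) * s))
            (iterAnti h i ((k:ℝ) * x) * (k:ℝ)) x := h2.comp x h1
        have h4 := h3.const_mul (1 / (k:ℝ))
        have h5 : (1 / (k:ℝ)) * (iterAnti h i ((k:ℝ) * x) * (k:ℝ)) = iterAnti h i ((k:ℝ) * x) := by
          rw [one_div_mul_eq_div, mul_div_assoc, div_self hk0, mul_one]
        rw [h5] at h4
        exact h4
      have hu'int : IntervalIntegrable (iteratedDeriv (i+1) w) volume 0 1 :=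
        (hwCl.continuous_iteratedDeriv (i+1) (by exact_mod_cast hi)).intervalIntegrable 0 1
      have hv'int : IntervalIntegrable (fun s => iterAnti h i ((k:ℝ) * s)) volume 0 1 :=
        (hci.comp (continuous_const.mul continuous_id)).intervalIntegrable 0 1
      have hibp := intervalIntegral.integral_mul_deriv_eq_deriv_mul hu hv hu'int hv'int
      have hbz : iteratedDeriv i w 1 * v 1 - iteratedDeriv i w 0 * v 0 = 0 := by
        have := hvanish i (le_of_lt hil)
        simp [this.1, this.2]
      rw [hbz, zero_sub] at hibp
      have hpull : (∫ x in (0:ℝ)..1, iteratedDeriv (i+1) w x * v x)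
          = (1 / (k:ℝ)) * ∫ x in (0:ℝ)..1,
              iteratedDeriv (i+1) w x * iterAnti h (i+1) ((k:ℝ) * x) := by
        rw [← intervalIntegral.integral_const_mul]
        congr 1
        funext x
        rw [hvdef]
        ring
      rw [hIH, hibp, hpull]
      rw [pow_succ]
      ring
  have hkey := key l le_rfl
  rw [hkey, abs_mul, abs_pow]
  have habs : |(-(1:ℝ)/k)| = 1 / k := by
    rw [abs_div, abs_neg, abs_one, abs_of_pos hkpos]
  rw [habs]
  have hcb := chunk_bound (iteratedDeriv l w) (iterAnti h l) K hlip
    (iterAnti_props hc hper hmean l).1 (iterAnti_props hc hper hmean l).2.1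
    (iterAnti_props hc hper hmean l).2.2 M hM0 hM k hk
  calc (1 / (k:ℝ)) ^ l * |∫ s in (0:ℝ)..1, iteratedDeriv l w s * iterAnti h l (k * s)|
      ≤ (1 / (k:ℝ)) ^ l * ((K : ℝ) * M / k) := by
        apply mul_le_mul_of_nonneg_left hcb (by positivity)
    _ = (K : ℝ) * M / (k:ℝ) ^ (l + 1) := by
        rw [pow_succ, one_div_pow]
        field_simp
end
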